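/- Let k ≥ n ≥ 3 and let Z_n(k) denote the set of all positive integers whose n-decomposition contains the summand F_{n,k}. Then Z_n(k) = { j + F_{n,k} + Σ_{i=1}^n F_{n,k+i}·N_{a_i}(m) : 0 ≤ j ≤ F_{n,k-(n-1)} - 1 and m ≥ 0 }. -/

import Mathlib

set_option linter.unusedSectionVars false

section Aux
variable {n : ℕ} {F : ℕ → ℕ} (hn : 3 ≤ n)
  (hF1 : ∀ i, 1 ≤ i → i ≤ n → F i = 1)
  (hFrec : ∀ m, n ≤ m → F (m + 1) = F m + F (m + 1 - n))

include hn hF1 hFrec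

lemma Fpos : ∀ m, 1 ≤ m → 1 ≤ F m := by
  intro m
  induction m using Nat.strong_induction_on with
  | _ m ih =>
    intro hm
    rcases le_or_gt m n with h | h
    · rw [hF1 m hm h]
    · obtain ⟨m', rfl⟩ : ∃ m', m = m' + 1 := ⟨m - 1, by omega⟩
      rw [hFrec m' (by omega)]
      have := ih m' (by omega) (by omega)
      omega

lemma Fmono : ∀ a b, 1 ≤ a → a ≤ b → F a ≤ F b := by
  intro a b ha hab
  induction b with
  | zero => omega
  | succ b ihb =>
    rcases Nat.lt_or_ge a (b+1) with h | h
    · have h1 : F a ≤ F b := ihb (by omega)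
      rcases le_or_gt n b with h2 | h2
      · rw [hFrec b h2]; omega
      · have := hF1 a ha (by omega)
        have := hF1 (b+1) (by omega) (by omega)
        omega
    · have : a = b + 1 := by omega
      subst this; rfl

lemma Flower : ∀ m, n ≤ m → m + 1 - n ≤ F m := by
  intro m
  induction m using Nat.strong_induction_on with
  | _ m ih =>
    intro hm
    rcases Nat.eq_or_lt_of_le hm with h | h
    · rw [hF1 m (by omega) (by omega)]; omega
    · obtain ⟨m', rfl⟩ : ∃ m', m = m' + 1 := ⟨m - 1, by omega⟩
      rw [hFrec m' (by omega)]
      have h1 := ih m' (by omega) (by omega)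
      have h2 := Fpos hn hF1 hFrec (m' + 1 - n) (by omega)
      omega

/-- Bound: a decreasing chain with elements in `[n, M]` has `F`-sum `< F (M+1)`. -/
lemma sum_bound : ∀ L : List ℕ, L.Pairwise (fun a b => b + n ≤ a) →
    (∀ c ∈ L, n ≤ c) → ∀ M, (∀ c ∈ L, c ≤ M) → (L.map F).sum < F (M + 1) := by
  intro L
  induction L with
  | nil =>
    intro _ _ M _
    simpa using Nat.lt_of_lt_of_le Nat.zero_lt_one (Fpos hn hF1 hFrec (M+1) (by omega))
  | cons c rest ih =>
    intro hp hlo M hhi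
    rw [List.pairwise_cons] at hp
    have hcn : n ≤ c := hlo c (by simp)
    have hrest : (rest.map F).sum < F (c - n + 1) :=
      ih hp.2 (fun x hx => hlo x (by simp [hx])) (c - n)
        (fun x hx => by have := hp.1 x hx; omega)
    have hrec := hFrec c hcn
    rw [show c + 1 - n = c - n + 1 by omega] at hrec
    have hcM : c ≤ M := hhi c (by simp)
    have hmono : F (c + 1) ≤ F (M + 1) := Fmono hn hF1 hFrec (c+1) (M+1) (by omega) (by omega)
    simp only [List.map_cons, List.sum_cons]
    omega

/-- Existence: every `x < F (M+1)` is an `F`-sum of a decreasing chain with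
elements in `[n, M]`. -/
lemma sum_exists : ∀ x M, x < F (M + 1) → ∃ L : List ℕ,
    L.Pairwise (fun a b => b + n ≤ a) ∧ (∀ c ∈ L, n ≤ c) ∧ (∀ c ∈ L, c ≤ M) ∧
    (L.map F).sum = x := by
  intro x
  induction x using Nat.strong_induction_on with
  | _ x ih =>
    intro M hx
    rcases Nat.eq_zero_or_pos x with rfl | hxpos
    · exact ⟨[], by simp⟩
    have hM : n ≤ M := by
      by_contra h
      rw [hF1 (M+1) (by omega) (by omega)] at hx
      omega
    classical
    set P : ℕ → Prop := fun c => n ≤ c ∧ F c ≤ x with hP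
    have hPn : P n := ⟨le_rfl, by rw [hF1 n (by omega) le_rfl]; omega⟩
    set c := Nat.findGreatest P M with hc
    have hPc : P c := Nat.findGreatest_spec hM hPn
    have hcM : c ≤ M := Nat.findGreatest_le M
    have hmax : ∀ d, c < d → d ≤ M → ¬ P d := fun d h1 h2 =>
      Nat.findGreatest_is_greatest h1 h2
    have hcn : n ≤ c := hPc.1
    have hFc : F c ≤ x := hPc.2
    have hxlt : x < F (c + 1) := by
      rcases Nat.eq_or_lt_of_le hcM with h | h
      · rw [h]; exact hx
      · have := hmax (c+1) (by omega) (by omega)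
        simp only [hP] at this
        push_neg at this
        have := this (by omega)
        omega
    have hrec := hFrec c hcn
    rw [show c + 1 - n = c - n + 1 by omega] at hrec
    have hr : x - F c < F (c - n + 1) := by omega
    obtain ⟨L', h1, h2, h3, h4⟩ := ih (x - F c)
      (by have := Fpos hn hF1 hFrec c (by omega); omega) (c - n) hr
    refine ⟨c :: L', ?_, ?_, ?_, ?_⟩
    · rw [List.pairwise_cons]
      exact ⟨fun b hb => by have := h3 b hb; omega, h1⟩
    · intro d hd; rcases hd with _ | hd
      · exact hcn
      · exact h2 d (by assumption)
    · intro d hd; rcases hd with _ | hd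
      · exact hcM
      · have := h3 d (by assumption); omega
    · simp only [List.map_cons, List.sum_cons]; omega

end Aux
set_option linter.unusedSectionVars false

section Aux2
variable {n : ℕ} {F : ℕ → ℕ} {S : ℕ → List ℕ} {W : ℕ → ℕ} (hn : 3 ≤ n)
  (hF1 : ∀ i, 1 ≤ i → i ≤ n → F i = 1)
  (hFrec : ∀ m, n ≤ m → F (m + 1) = F m + F (m + 1 - n))
  (hS1 : ∀ i, 1 ≤ i → i ≤ n → S i = [i])
  (hSrec : ∀ m, n ≤ m → S (m + 1) = S m ++ S (m + 1 - n))
  (hW : ∀ m, n ≤ m → S m = (List.range (S m).length).map W)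

include hn hF1 hFrec hS1 hSrec

lemma Slen : ∀ m, 1 ≤ m → (S m).length = F m := by
  intro m
  induction m using Nat.strong_induction_on with
  | _ m ih =>
    intro hm
    rcases le_or_gt m n with h | h
    · rw [hS1 m hm h, hF1 m hm h]; rfl
    · obtain ⟨m', rfl⟩ : ∃ m', m = m' + 1 := ⟨m - 1, by omega⟩
      rw [hSrec m' (by omega), hFrec m' (by omega), List.length_append,
        ih m' (by omega) (by omega), ih (m' + 1 - n) (by omega) (by omega)]

include hW

lemma SW : ∀ m, n ≤ m → S m = (List.range (F m)).map W := by
  intro m hm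
  rw [← Slen hn hF1 hFrec hS1 hSrec m (by omega)]
  exact hW m hm

lemma Wshift : ∀ c, 2 * n - 1 ≤ c → ∀ t, t < F (c + 1 - n) →
    W (F c + t) = W t := by
  intro c hc t ht
  have e1 : S (c + 1) = S c ++ S (c + 1 - n) := hSrec c (by omega)
  rw [SW hn hF1 hFrec hS1 hSrec hW (c+1) (by omega),
    SW hn hF1 hFrec hS1 hSrec hW c (by omega),
    SW hn hF1 hFrec hS1 hSrec hW (c+1-n) (by omega),
    hFrec c (by omega), List.range_add, List.map_append, List.map_map] at e1
  have h5 := List.append_cancel_left e1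
  have h6 := congrArg (fun l => l[t]?) h5
  simp only [List.getElem?_map, List.getElem?_range ht, Function.comp] at h6
  simpa using h6

/-- Count of letter `i` in prefix of length `sum` of the infinite word, for a
decomposition chain. -/
lemma count_decomp : ∀ L : List ℕ, L.Pairwise (fun a b => b + n ≤ a) →
    (∀ c ∈ L, n ≤ c) → ∀ i,
    ((List.range ((L.map F).sum)).map W).count i
      = (L.map (fun c => (S c).count i)).sum := by
  intro L
  induction L with
  | nil => simp
  | cons c rest ih =>
    intro hp hlo i
    rw [List.pairwise_cons] at hp
    have hcn : n ≤ c := hlo c (by simp)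
    have hrest : (rest.map F).sum < F (c - n + 1) :=
      sum_bound hn hF1 hFrec rest hp.2 (fun x hx => hlo x (by simp [hx])) (c - n)
        (fun x hx => by have := hp.1 x hx; omega)
    simp only [List.map_cons, List.sum_cons]
    rw [List.range_add, List.map_append, List.count_append, List.map_map]
    congr 1
    · rw [← SW hn hF1 hFrec hS1 hSrec hW c hcn]
    · rw [← ih hp.2 (fun x hx => hlo x (by simp [hx])) i]
      congr 1
      apply List.map_congr_left
      intro t ht
      rw [List.mem_range] at ht
      rcases rest.eq_nil_or_concat with rfl | hne
      · simp at ht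
      · -- rest nonempty, so c ≥ 2n
        have hne' : rest ≠ [] := by rcases hne with ⟨l, a, rfl⟩; simp
        obtain ⟨d, hd⟩ := List.exists_mem_of_ne_nil rest hne'
        have h1 : n ≤ d := hlo d (by simp [hd])
        have h2 : d + n ≤ c := hp.1 d hd
        have : c + 1 - n = c - n + 1 := by omega
        exact Wshift hn hF1 hFrec hS1 hSrec hW c (by omega) t
          (by rw [show c + 1 - n = c - n + 1 by omega]; omega)

lemma Eg (k : ℕ) (hk : n ≤ k) : ∀ m, 1 ≤ m →
    ∑ i ∈ Finset.Icc 1 n, F (k + i) * (S m).count i = F (k + m) := by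
  intro m
  induction m using Nat.strong_induction_on with
  | _ m ih =>
    intro hm
    rcases le_or_gt m n with h | h
    · rw [hS1 m hm h, Finset.sum_eq_single_of_mem m (Finset.mem_Icc.mpr ⟨hm, h⟩)]
      · simp
      · intro b _ hbm
        simp [List.count_singleton', hbm, hbm.symm]
    · obtain ⟨m', rfl⟩ : ∃ m', m = m' + 1 := ⟨m - 1, by omega⟩
      have h1 : n ≤ m' := by omega
      rw [hSrec m' h1]
      simp only [List.count_append, Nat.mul_add, Finset.sum_add_distrib]
      rw [ih m' (by omega) (by omega), ih (m' + 1 - n) (by omega) (by omega)]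
      have hrec := hFrec (k + m') (by omega)
      rw [show k + m' + 1 - n = k + (m' + 1 - n) by omega] at hrec
      rw [show k + (m' + 1) = k + m' + 1 by omega, hrec]

lemma Gsum (k : ℕ) (hk : n ≤ k) : ∀ L : List ℕ, L.Pairwise (fun a b => b + n ≤ a) →
    (∀ c ∈ L, n ≤ c) →
    ∑ i ∈ Finset.Icc 1 n, F (k + i) * ((List.range ((L.map F).sum)).map W).count i
      = (L.map (fun c => F (k + c))).sum := by
  intro L hp hlo
  have hcd := count_decomp hn hF1 hFrec hS1 hSrec hW L hp hlo
  simp_rw [hcd]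
  clear hcd hp
  induction L with
  | nil => simp
  | cons c rest ih =>
    simp only [List.map_cons, List.sum_cons, Nat.mul_add, Finset.sum_add_distrib]
    rw [Eg hn hF1 hFrec hS1 hSrec hW k hk c (by have := hlo c (by simp); omega),
      ih (fun x hx => hlo x (by simp [hx]))]

end Aux2

/-- Let `k ≥ n ≥ 3`.  `F` is the generalized Fibonacci sequence, `S` the
`n`-string sequence, `W = S_∞` the infinite `n`-string, and
`N_{a_i}(m) = ((List.range m).map W).count i`.  The set `Z_n(k)` of positive
integers whose `n`-decomposition contains the summand `F k` equals
`{ j + F k + Σ_{i=1}^n F (k+i) · N_{a_i}(m) : 0 ≤ j ≤ F (k-(n-1)) - 1, m ≥ 0 }`. -/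
theorem fixed_summand_set (n k : ℕ) (hn : 3 ≤ n) (hk : n ≤ k) (F : ℕ → ℕ)
    (hF1 : ∀ i, 1 ≤ i → i ≤ n → F i = 1)
    (hFrec : ∀ m, n ≤ m → F (m + 1) = F m + F (m + 1 - n))
    (S : ℕ → List ℕ)
    (hS1 : ∀ i, 1 ≤ i → i ≤ n → S i = [i])
    (hSrec : ∀ m, n ≤ m → S (m + 1) = S m ++ S (m + 1 - n))
    (W : ℕ → ℕ)
    (hW : ∀ m, n ≤ m → S m = (List.range (S m).length).map W) :
    {x : ℕ | 0 < x ∧ ∃ L : List ℕ, (∀ c ∈ L, n ≤ c) ∧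
        L.Chain' (fun a b => a + n ≤ b) ∧ (L.map F).sum = x ∧ k ∈ L}
      = {y : ℕ | ∃ j m : ℕ, j + 1 ≤ F (k - (n - 1)) ∧
          y = j + F k + ∑ i ∈ Finset.Icc 1 n,
            F (k + i) * ((List.range m).map W).count i} := by
  haveI : IsTrans ℕ (fun a b => a + n ≤ b) := ⟨fun a b c h1 h2 => by omega⟩
  have hknn : k - (n - 1) = k - n + 1 := by omega
  ext x
  simp only [Set.mem_setOf_eq]
  constructor
  · rintro ⟨hx, L, hlo, hch, hsum, hkL⟩
    obtain ⟨L₁, L₂, rfl⟩ := List.append_of_mem hkL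
    have hpw : (L₁ ++ k :: L₂).Pairwise (fun a b => a + n ≤ b) :=
      List.isChain_iff_pairwise.mp hch
    rw [List.pairwise_append, List.pairwise_cons] at hpw
    obtain ⟨hp1, ⟨hk2, hp2⟩, hcross⟩ := hpw
    have hL1hi : ∀ c ∈ L₁, c ≤ k - n := fun c hc => by
      have := hcross c hc k (by simp); omega
    have hL1lo : ∀ c ∈ L₁, n ≤ c := fun c hc => hlo c (by simp [hc])
    -- the lower part
    have hjb : (L₁.map F).sum < F (k - n + 1) := by
      have := sum_bound hn hF1 hFrec L₁.reverse
        (List.pairwise_reverse.mpr hp1)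
        (fun c hc => hL1lo c (List.mem_reverse.mp hc)) (k - n)
        (fun c hc => hL1hi c (List.mem_reverse.mp hc))
      rwa [List.map_reverse, List.sum_reverse] at this
    -- the upper part
    set L₂' : List ℕ := L₂.map (fun d => d - k) with hL₂'
    have hL₂mem : ∀ d ∈ L₂, k + n ≤ d := fun d hd => hk2 d hd
    have hp2' : L₂'.Pairwise (fun a b => a + n ≤ b) := by
      rw [hL₂', List.pairwise_map]
      exact hp2.imp_of_mem (fun {a b} ha hb hab => by
        have := hL₂mem a ha; have := hL₂mem b hb; omega)
    have hrevpw : L₂'.reverse.Pairwise (fun a b => b + n ≤ a) :=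
      List.pairwise_reverse.mpr hp2'
    have hrevlo : ∀ c ∈ L₂'.reverse, n ≤ c := by
      intro c hc
      rw [List.mem_reverse, hL₂', List.mem_map] at hc
      obtain ⟨d, hd, rfl⟩ := hc
      have := hL₂mem d hd; omega
    have hG := Gsum hn hF1 hFrec hS1 hSrec hW k hk L₂'.reverse hrevpw hrevlo
    refine ⟨(L₁.map F).sum, ((L₂'.reverse.map F).sum), by rw [hknn]; omega, ?_⟩
    rw [hG]
    have he0 : L₂'.map (fun c => F (k + c)) = L₂.map F := by
      rw [hL₂', List.map_map]
      apply List.map_congr_left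
      intro d hd
      have := hL₂mem d hd
      simp only [Function.comp]
      rw [show k + (d - k) = d by omega]
    have he1 : L₂'.reverse.map (fun c => F (k + c)) = (L₂.map F).reverse := by
      rw [List.map_reverse, he0]
    rw [he1, List.sum_reverse]
    simp only [List.map_append, List.sum_append, List.map_cons, List.sum_cons] at hsum
    omega
  · rintro ⟨j, m, hj, rfl⟩
    rw [hknn] at hj
    obtain ⟨L₁, hp1, hlo1, hhi1, hsum1⟩ := sum_exists hn hF1 hFrec j (k - n) (by omega)
    have hmlt : m < F (m + n + 1) := by
      have := Flower hn hF1 hFrec (m + n + 1) (by omega)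
      omega
    obtain ⟨L₂, hp2, hlo2, hhi2, hsum2⟩ := sum_exists hn hF1 hFrec m (m + n) hmlt
    have hG := Gsum hn hF1 hFrec hS1 hSrec hW k hk L₂ hp2 hlo2
    rw [hsum2] at hG
    set L : List ℕ := L₁.reverse ++ k :: (L₂.reverse.map (fun c => k + c)) with hL
    have hFkpos : 1 ≤ F k := Fpos hn hF1 hFrec k (by omega)
    refine ⟨by positivity, L, ?_, ?_, ?_, by simp [hL]⟩
    · intro c hc
      rw [hL] at hc
      simp only [List.mem_append, List.mem_reverse, List.mem_cons, List.mem_map] at hc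
      rcases hc with hc | rfl | ⟨d, hd, rfl⟩
      · exact hlo1 c hc
      · omega
      · have := hlo2 d hd; omega
    · apply List.Pairwise.isChain
      rw [hL, List.pairwise_append, List.pairwise_cons]
      refine ⟨List.pairwise_reverse.mpr hp1, ⟨?_, ?_⟩, ?_⟩
      · intro b hb
        rw [List.mem_map] at hb
        obtain ⟨d, hd, rfl⟩ := hb
        have := hlo2 d (List.mem_reverse.mp hd); omega
      · rw [List.pairwise_map]
        apply List.Pairwise.imp _ (List.pairwise_reverse.mpr hp2)
        intro a b hab; omega
      · intro a ha b hb
        rw [List.mem_reverse] at ha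
        have h1 := hhi1 a ha
        rcases List.mem_cons.mp hb with rfl | hb
        · omega
        · rw [List.mem_map] at hb
          obtain ⟨d, hd, rfl⟩ := hb
          omega
    · rw [hL]
      simp only [List.map_append, List.sum_append, List.map_cons, List.sum_cons,
        List.map_reverse, List.sum_reverse, List.map_map]
      rw [hsum1]
      have hcomp : L₂.map (F ∘ fun c => k + c) = L₂.map (fun c => F (k + c)) := rfl
      rw [hcomp, ← hG]
      omega
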